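/- Fix b ∈ ℝ with b ≠ −3/16, set γ = 1 + (16/3)b, and when γ < 0 set s_* = √(−γ/(1−γ)). Let ω > 0 and let c satisfy −2√ω < c ≤ 2√ω if γ > 0, or −2√ω < c < −2 s_* √ω if γ < 0. Then the momentum of the soliton satisfies P(φ_{ω,c}) = (c/2)·(−1 + 1/γ)·M(φ_{ω,c}) + (2/γ)·√(4ω − c²), where M(φ_{ω,c}) = ∫_ℝ Φ_{ω,c}² and P(φ_{ω,c}) = Re ∫_ℝ i φ_{ω,c}'(x)·conj(φ_{ω,c}(x)) dx. -/

import Mathlib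

open MeasureTheory Real Set

/-- The soliton profile of the derivative NLS after gauge transformation:
the algebraic profile when `c = 2√ω`, the bright profile when `-2√ω < c < 2√ω`. -/
noncomputable def Phi (γ ω c x : ℝ) : ℝ :=
  if c = 2 * Real.sqrt ω then
    Real.sqrt (4 * c / ((c * x) ^ 2 + γ))
  else
    Real.sqrt (2 * (4 * ω - c ^ 2) /
      (Real.sqrt (c ^ 2 + γ * (4 * ω - c ^ 2)) * Real.cosh (Real.sqrt (4 * ω - c ^ 2) * x) - c))

/-- The complex soliton profile
`φ_{ω,c}(x) = exp(i((c/2)x - (1/4)∫_{-∞}^x Φ²)) Φ(x)`. -/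
noncomputable def solp (γ ω c x : ℝ) : ℂ :=
  Complex.exp (Complex.I *
      Complex.ofReal (c / 2 * x - 1 / 4 * ∫ y in Iic x, (Phi γ ω c y) ^ 2)) *
    Complex.ofReal (Phi γ ω c x)

/-- The mass `M(φ_{ω,c}) = ∫_ℝ Φ_{ω,c}²`. -/
noncomputable def solMass (γ ω c : ℝ) : ℝ := ∫ x : ℝ, (Phi γ ω c x) ^ 2

/-- The momentum `P(φ_{ω,c}) = Re ∫_ℝ i φ' conj(φ)`. -/
noncomputable def solMom (γ ω c : ℝ) : ℝ :=
  (∫ x : ℝ, Complex.I * deriv (fun y => solp γ ω c y) x *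
    (starRingEnd ℂ) (solp γ ω c x)).re

open Filter Topology

lemma abs_le_cosh (y : ℝ) : |y| ≤ Real.cosh y := by
  rw [← Real.cosh_abs]
  rcases eq_or_lt_of_le (abs_nonneg y) with h | h
  · rw [← h]; simpa using (Real.one_le_cosh 0).trans (le_of_eq (by simp))
  · exact le_of_lt ((Real.self_lt_sinh_iff.2 h).trans (Real.sinh_lt_cosh _))

lemma quad_le_cosh (y : ℝ) : (1 + y ^ 2) / 8 ≤ Real.cosh y := by
  have h1 := Real.one_le_cosh (y / 2)
  have h2 := abs_le_cosh (y / 2)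
  have h3 : Real.cosh y = 2 * Real.cosh (y / 2) ^ 2 - 1 := by
    have h4 := Real.cosh_two_mul (y / 2)
    have h5 := Real.cosh_sq_sub_sinh_sq (y / 2)
    rw [show (2 : ℝ) * (y / 2) = y by ring] at h4
    linarith
  nlinarith [sq_abs (y / 2), abs_nonneg (y / 2)]

lemma integrable_of_le_inv_one_add_sq {C : ℝ} {f : ℝ → ℝ} (hf : Continuous f)
    (h : ∀ x, |f x| ≤ C / (1 + x ^ 2)) : Integrable f := by
  refine (integrable_inv_one_add_sq.const_mul C).mono' hf.aestronglyMeasurable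
    (ae_of_all _ fun x => ?_)
  have h1 : (0 : ℝ) < 1 + x ^ 2 := by positivity
  rw [Real.norm_eq_abs]
  calc |f x| ≤ C / (1 + x ^ 2) := h x
    _ = C * (1 + x ^ 2)⁻¹ := by rw [div_eq_mul_inv]

lemma integrable_of_le_inv_cosh {k C : ℝ} (hk : 0 < k) {f : ℝ → ℝ} (hf : Continuous f)
    (h : ∀ x, |f x| ≤ C / Real.cosh (k * x)) : Integrable f := by
  have hC : 0 ≤ C := by
    have h0 := (abs_nonneg (f 0)).trans (h 0)
    rwa [mul_zero, Real.cosh_zero, div_one] at h0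
  set m := min 1 (k ^ 2) with hm
  have hm0 : 0 < m := lt_min one_pos (by positivity)
  have hm1 : m ≤ 1 := min_le_left _ _
  have hm2 : m ≤ k ^ 2 := min_le_right _ _
  apply integrable_of_le_inv_one_add_sq (C := 8 * C / m) hf
  intro x
  refine (h x).trans ?_
  rw [div_le_div_iff₀ (Real.cosh_pos _) (by positivity)]
  have hq := quad_le_cosh (k * x)
  have hx2 : m * (1 + x ^ 2) ≤ 1 + (k * x) ^ 2 := by nlinarith [sq_nonneg x]
  rw [div_mul_eq_mul_div, le_div_iff₀ hm0]
  nlinarith [Real.cosh_pos (k * x)]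

lemma integral_eq_of_tendsto {f G : ℝ → ℝ} {L l : ℝ} (hd : ∀ x, HasDerivAt G (f x) x)
    (hi : Integrable f) (ht : Tendsto G atTop (𝓝 L)) (hb : Tendsto G atBot (𝓝 l)) :
    ∫ x, f x = L - l := by
  rw [← intervalIntegral.integral_Iic_add_Ioi (b := (0 : ℝ)) hi.integrableOn hi.integrableOn,
    MeasureTheory.integral_Iic_of_hasDerivAt_of_tendsto' (fun x _ => hd x) hi.integrableOn hb,
    MeasureTheory.integral_Ioi_of_hasDerivAt_of_tendsto
      (hd 0).continuousAt.continuousWithinAt (fun x _ => hd x) hi.integrableOn ht]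
  ring


lemma mom_repr (γ ω c : ℝ) (Φ' : ℝ → ℝ)
    (hcont : Continuous (Phi γ ω c))
    (hd : ∀ x, HasDerivAt (Phi γ ω c) (Φ' x) x)
    (h2 : Integrable (fun x => (Phi γ ω c x) ^ 2))
    (h4 : Integrable (fun x => (Phi γ ω c x) ^ 4))
    (hIm : Integrable (fun x => Φ' x * Phi γ ω c x)) :
    solMom γ ω c = ∫ x, (-(c / 2) * (Phi γ ω c x) ^ 2 + (Phi γ ω c x) ^ 4 / 4) := by
  set Φ : ℝ → ℝ := Phi γ ω c with hΦdef
  set θ : ℝ → ℝ := fun x => c / 2 * x - 1 / 4 * ∫ y in Iic x, (Φ y) ^ 2 with hθdef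
  have hcont2 : Continuous fun x => (Φ x) ^ 2 := hcont.pow 2
  have hθ : ∀ x, HasDerivAt θ (c / 2 - (Φ x) ^ 2 / 4) x := by
    intro x
    have hrep : θ = fun z => c / 2 * z -
        1 / 4 * ((∫ y in Iic (0 : ℝ), (Φ y) ^ 2) + ∫ y in (0 : ℝ)..z, (Φ y) ^ 2) := by
      funext z
      have h := intervalIntegral.integral_Iic_sub_Iic
        (h2.integrableOn (s := Iic (0 : ℝ))) (h2.integrableOn (s := Iic z))
      simp only [hθdef]
      rw [← h]; ring
    rw [hrep]
    have hI : HasDerivAt (fun z => ∫ y in (0 : ℝ)..z, (Φ y) ^ 2) ((Φ x) ^ 2) x :=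
      intervalIntegral.integral_hasDerivAt_right h2.intervalIntegrable
        (hcont2.stronglyMeasurableAtFilter _ _) hcont2.continuousAt
    have h1 := ((hasDerivAt_id x).const_mul (c / 2)).sub ((hI.const_add
      (∫ y in Iic (0 : ℝ), (Φ y) ^ 2)).const_mul (1 / 4))
    refine h1.congr_deriv ?_
    ring
  have hdsolp : ∀ x, HasDerivAt (solp γ ω c)
      (Complex.exp (Complex.I * ((θ x : ℝ) : ℂ)) *
        (Complex.I * (((c / 2 - (Φ x) ^ 2 / 4 : ℝ)) : ℂ) * ((Φ x : ℝ) : ℂ) + ((Φ' x : ℝ) : ℂ))) x := by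
    intro x
    have h1 : HasDerivAt (fun z => ((θ z : ℝ) : ℂ)) (((c / 2 - (Φ x) ^ 2 / 4 : ℝ)) : ℂ) x :=
      (hθ x).ofReal_comp
    have h2' : HasDerivAt (fun z => Complex.exp (Complex.I * ((θ z : ℝ) : ℂ)))
        (Complex.exp (Complex.I * ((θ x : ℝ) : ℂ)) *
          (Complex.I * (((c / 2 - (Φ x) ^ 2 / 4 : ℝ)) : ℂ))) x := by
      exact (h1.const_mul Complex.I).cexp
    have h3 : HasDerivAt (fun z => ((Φ z : ℝ) : ℂ)) (((Φ' x : ℝ)) : ℂ) x := (hd x).ofReal_comp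
    have h4' := h2'.mul h3
    have : solp γ ω c = fun z => Complex.exp (Complex.I * ((θ z : ℝ) : ℂ)) * ((Φ z : ℝ) : ℂ) := by
      funext z; rfl
    rw [this]
    refine h4'.congr_deriv ?_
    ring
  have hint_id : ∀ x, Complex.I * deriv (fun y => solp γ ω c y) x *
      (starRingEnd ℂ) (solp γ ω c x)
      = (((-(c / 2) * (Φ x) ^ 2 + (Φ x) ^ 4 / 4 : ℝ)) : ℂ)
        + Complex.I * (((Φ' x * Φ x : ℝ)) : ℂ) := by
    intro x
    have hde : deriv (fun y => solp γ ω c y) x = Complex.exp (Complex.I * ((θ x : ℝ) : ℂ)) *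
        (Complex.I * (((c / 2 - (Φ x) ^ 2 / 4 : ℝ)) : ℂ) * ((Φ x : ℝ) : ℂ) + ((Φ' x : ℝ) : ℂ)) :=
      (hdsolp x).deriv
    have hsx : solp γ ω c x = Complex.exp (Complex.I * ((θ x : ℝ) : ℂ)) * ((Φ x : ℝ) : ℂ) := rfl
    rw [hde, hsx]
    set E := Complex.exp (Complex.I * ((θ x : ℝ) : ℂ)) with hE
    have hEc : E * (starRingEnd ℂ) E = 1 := by
      rw [hE, ← Complex.exp_conj, ← Complex.exp_add]
      simp [Complex.conj_ofReal]
    rw [map_mul, Complex.conj_ofReal]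
    push_cast
    linear_combination (Complex.I ^ 2 * ((c : ℂ) / 2 - ((Φ x : ℝ) : ℂ) ^ 2 / 4) * ((Φ x : ℝ) : ℂ) ^ 2
        + Complex.I * ((Φ' x : ℝ) : ℂ) * ((Φ x : ℝ) : ℂ)) * hEc
      + (((c : ℂ) / 2 - ((Φ x : ℝ) : ℂ) ^ 2 / 4) * ((Φ x : ℝ) : ℂ) ^ 2) * Complex.I_sq
  have hg : Integrable (fun x => -(c / 2) * (Φ x) ^ 2 + (Φ x) ^ 4 / 4) :=
    (h2.const_mul (-(c / 2))).add (h4.div_const 4)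
  rw [solMom]
  rw [show (fun x => Complex.I * deriv (fun y => solp γ ω c y) x *
      (starRingEnd ℂ) (solp γ ω c x)) = fun x =>
      (((-(c / 2) * (Φ x) ^ 2 + (Φ x) ^ 4 / 4 : ℝ)) : ℂ)
        + Complex.I * (((Φ' x * Φ x : ℝ)) : ℂ) from funext hint_id]
  have hg1 : Integrable (fun x => ((-(c / 2) * (Φ x) ^ 2 + (Φ x) ^ 4 / 4 : ℝ) : ℂ)) := hg.ofReal
  have hh1 : Integrable (fun x => Complex.I * ((Φ' x * Φ x : ℝ) : ℂ)) := hIm.ofReal.const_mul _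
  have h5 : (∫ a, ((-(c / 2) * (Φ a) ^ 2 + (Φ a) ^ 4 / 4 : ℝ) : ℂ))
      = (((∫ x, (-(c / 2) * (Φ x) ^ 2 + (Φ x) ^ 4 / 4) : ℝ)) : ℂ) := integral_ofReal
  have h6 : (∫ a, ((Φ' a * Φ a : ℝ) : ℂ)) = (((∫ x, Φ' x * Φ x : ℝ)) : ℂ) := integral_ofReal
  rw [integral_add hg1 hh1, integral_const_mul, h5, h6]
  simp


set_option maxHeartbeats 1000000 in
lemma alg_branch (γ ω c : ℝ) (hγ : 0 < γ) (hω : 0 < ω) (hc : c = 2 * Real.sqrt ω) :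
    solMom γ ω c = c / 2 * (-1 + 1 / γ) * solMass γ ω c + 2 / γ * Real.sqrt (4 * ω - c ^ 2) := by
  have hsw : 0 < Real.sqrt ω := Real.sqrt_pos.2 hω
  have hc0 : 0 < c := by rw [hc]; positivity
  have hc2 : c ^ 2 = 4 * ω := by rw [hc, mul_pow, Real.sq_sqrt hω.le]; ring
  have hsq0 : Real.sqrt (4 * ω - c ^ 2) = 0 := by
    rw [show 4 * ω - c ^ 2 = 0 by rw [hc2]; ring, Real.sqrt_zero]
  set q : ℝ → ℝ := fun x => (c * x) ^ 2 + γ with hqdef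
  have hq0 : ∀ x, 0 < q x := fun x => by simp only [hqdef]; positivity
  have hqc : Continuous q := by simp only [hqdef]; fun_prop
  set u : ℝ → ℝ := fun x => 4 * c / q x with hudef
  have hPhi : Phi γ ω c = fun x => Real.sqrt (u x) := by
    funext x; simp only [Phi, if_pos hc, hudef, hqdef]
  have hu0 : ∀ x, 0 < u x := fun x => div_pos (by linarith) (hq0 x)
  have hP2 : ∀ x, (Phi γ ω c x) ^ 2 = u x := fun x => by
    rw [hPhi]; exact Real.sq_sqrt (hu0 x).le
  have huc : Continuous u := by
    rw [hudef]; exact continuous_const.div hqc fun x => (hq0 x).ne'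
  have hcont : Continuous (Phi γ ω c) := by
    rw [hPhi]; exact Real.continuous_sqrt.comp huc
  have hqd : ∀ x, HasDerivAt q (2 * c ^ 2 * x) x := by
    intro x
    have h := (((hasDerivAt_id x).const_mul c).pow 2).add_const γ
    rw [hqdef]
    refine h.congr_deriv ?_
    simp; ring
  have hud : ∀ x, HasDerivAt u (-(8 * c ^ 3 * x) / (q x) ^ 2) x := by
    intro x
    have h := (hasDerivAt_const x (4 * c)).div (hqd x) (hq0 x).ne'
    rw [hudef]
    refine h.congr_deriv ?_
    field_simp
    ring
  set Φ' : ℝ → ℝ := fun x => -(8 * c ^ 3 * x) / (q x) ^ 2 / (2 * Real.sqrt (u x)) with hΦ'def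
  have hΦd : ∀ x, HasDerivAt (Phi γ ω c) (Φ' x) x := by
    intro x
    rw [hPhi]
    exact (hud x).sqrt (hu0 x).ne'
  have hImeq : ∀ x, Φ' x * Phi γ ω c x = -(4 * c ^ 3 * x) / (q x) ^ 2 := by
    intro x
    rw [hPhi, hΦ'def]
    have hs : Real.sqrt (u x) ≠ 0 := (Real.sqrt_pos.2 (hu0 x)).ne'
    field_simp
    ring
  -- bounds
  set m0 : ℝ := min γ (c ^ 2) with hm0def
  have hm0 : 0 < m0 := lt_min hγ (by positivity)
  have hm0γ : m0 ≤ γ := min_le_left _ _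
  have hm0c : m0 ≤ c ^ 2 := min_le_right _ _
  have hql : ∀ x, m0 * (1 + x ^ 2) ≤ q x := by
    intro x
    simp only [hqdef]
    nlinarith [sq_nonneg x, sq_nonneg (c * x)]
  have hqγ : ∀ x, γ ≤ q x := by
    intro x; simp only [hqdef]; nlinarith [sq_nonneg (c * x)]
  have h2 : Integrable (fun x => (Phi γ ω c x) ^ 2) := by
    apply integrable_of_le_inv_one_add_sq (C := 4 * c / m0) (hcont.pow 2)
    intro x
    rw [Pi.pow_apply, hP2, hudef]
    rw [abs_of_nonneg (hu0 x).le, div_le_div_iff₀ (hq0 x) (by positivity)]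
    have hA : (4 * c / m0) * (m0 * (1 + x ^ 2)) ≤ (4 * c / m0) * q x :=
      mul_le_mul_of_nonneg_left (hql x) (by positivity)
    have hB : (4 * c / m0) * (m0 * (1 + x ^ 2)) = 4 * c * (1 + x ^ 2) := by
      field_simp
    linarith
  have h4 : Integrable (fun x => (Phi γ ω c x) ^ 4) := by
    apply integrable_of_le_inv_one_add_sq (C := 16 * c ^ 2 / (γ * m0)) (hcont.pow 4)
    intro x
    have h1 : (Phi γ ω c x) ^ 4 = (u x) ^ 2 := by
      rw [show (4 : ℕ) = 2 * 2 from rfl, pow_mul, hP2]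
    rw [Pi.pow_apply, h1, hudef, abs_of_nonneg (by positivity), div_pow,
      div_le_div_iff₀ (by positivity) (by positivity)]
    have h5 := hql x
    have h6 := hqγ x
    have h7 := hq0 x
    have hA : γ * (m0 * (1 + x ^ 2)) ≤ q x * q x :=
      mul_le_mul h6 h5 (by positivity) h7.le
    have hC : 16 * c ^ 2 / (γ * m0) * (γ * (m0 * (1 + x ^ 2)))
        ≤ 16 * c ^ 2 / (γ * m0) * (q x * q x) :=
      mul_le_mul_of_nonneg_left hA (by positivity)
    have hB : 16 * c ^ 2 / (γ * m0) * (γ * (m0 * (1 + x ^ 2))) = 16 * c ^ 2 * (1 + x ^ 2) := by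
      field_simp
    nlinarith
  have hIm : Integrable (fun x => Φ' x * Phi γ ω c x) := by
    rw [show (fun x => Φ' x * Phi γ ω c x) = fun x => -(4 * c ^ 3 * x) / (q x) ^ 2
      from funext hImeq]
    apply integrable_of_le_inv_one_add_sq (C := 2 * c ^ 3 / m0 ^ 2)
    · exact (continuous_const.mul continuous_id).neg.div (hqc.pow 2) fun x => by positivity
    · intro x
      rw [abs_div, abs_of_pos (by positivity : (0:ℝ) < (q x) ^ 2),
        div_le_div_iff₀ (by positivity) (by positivity)]
      have h5 := hql x
      have h6 : 2 * |x| ≤ 1 + x ^ 2 := by nlinarith [sq_nonneg (|x| - 1), sq_abs x]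
      have h7 : |(-(4 * c ^ 3 * x))| = 4 * c ^ 3 * |x| := by
        rw [abs_neg, abs_mul, abs_of_pos (by positivity : (0:ℝ) < 4 * c ^ 3)]
      rw [h7]
      have hA : m0 * (1 + x ^ 2) * (m0 * (1 + x ^ 2)) ≤ q x * q x :=
        mul_le_mul h5 h5 (by positivity) (hq0 x).le
      have hC : 2 * c ^ 3 / m0 ^ 2 * (m0 * (1 + x ^ 2) * (m0 * (1 + x ^ 2)))
          ≤ 2 * c ^ 3 / m0 ^ 2 * (q x * q x) :=
        mul_le_mul_of_nonneg_left hA (by positivity)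
      have hB : 2 * c ^ 3 / m0 ^ 2 * (m0 * (1 + x ^ 2) * (m0 * (1 + x ^ 2)))
          = 2 * c ^ 3 * ((1 + x ^ 2) * (1 + x ^ 2)) := by
        field_simp
      nlinarith [abs_nonneg x, sq_nonneg x,
        mul_le_mul_of_nonneg_left h6 (by positivity : (0:ℝ) ≤ 2 * c ^ 3 * (1 + x ^ 2))]
  -- final computation
  rw [mom_repr γ ω c Φ' hcont hΦd h2 h4 hIm]
  have hsplit : (fun x => -(c / 2) * (Phi γ ω c x) ^ 2 + (Phi γ ω c x) ^ 4 / 4)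
      = fun x => (c / 2 * (-1 + 1 / γ)) * (Phi γ ω c x) ^ 2
        + (1 / 4) * ((Phi γ ω c x) ^ 4 - (2 * c / γ) * (Phi γ ω c x) ^ 2) := by
    funext x
    field_simp
    ring
  have h24 : Integrable (fun x => (Phi γ ω c x) ^ 4 - (2 * c / γ) * (Phi γ ω c x) ^ 2) :=
    h4.sub (h2.const_mul _)
  rw [hsplit, integral_add (h2.const_mul _) (h24.const_mul _),
    integral_const_mul, integral_const_mul]
  -- the residual integral is 0 via FTC
  have hzero : ∫ x, ((Phi γ ω c x) ^ 4 - (2 * c / γ) * (Phi γ ω c x) ^ 2) = 0 := by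
    set G : ℝ → ℝ := fun x => 8 * c ^ 2 / γ * (x / q x) with hGdef
    have hGd : ∀ x, HasDerivAt G ((Phi γ ω c x) ^ 4 - (2 * c / γ) * (Phi γ ω c x) ^ 2) x := by
      intro x
      have h := ((hasDerivAt_id x).div (hqd x) (hq0 x).ne').const_mul (8 * c ^ 2 / γ)
      rw [hGdef]
      refine h.congr_deriv ?_
      have h1 : (Phi γ ω c x) ^ 4 = (u x) ^ 2 := by
        rw [show (4 : ℕ) = 2 * 2 from rfl, pow_mul, hP2]
      rw [h1, hP2, hudef]
      field_simp
      simp only [hqdef, id_eq]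
      ring
    have htq : Tendsto (fun x : ℝ => x / q x) atTop (𝓝 0) := by
      have h1 : Tendsto (fun x : ℝ => q x / x) atTop atTop := by
        apply tendsto_atTop_mono' _ _ (tendsto_atTop_add_const_right _ (-|γ|)
          (tendsto_id.const_mul_atTop (show (0:ℝ) < c ^ 2 by positivity)))
        filter_upwards [eventually_ge_atTop (1 : ℝ)] with x hx
        have hx0 : 0 < x := by linarith
        simp only [hqdef, id_eq]
        rw [le_div_iff₀ hx0]
        have h8 : -|γ| ≤ γ := neg_abs_le γ
        nlinarith [abs_nonneg γ]
      have h2' := h1.inv_tendsto_atTop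
      refine h2'.congr' ?_
      filter_upwards [eventually_gt_atTop (0 : ℝ)] with x hx
      simp only [Pi.inv_apply, inv_div]
    have hbq : Tendsto (fun x : ℝ => x / q x) atBot (𝓝 0) := by
      have hcomp := htq.comp tendsto_neg_atBot_atTop
      have hqe : ∀ x : ℝ, q (-x) = q x := by
        intro x
        simp only [hqdef]
        ring
      have heq : (fun x : ℝ => x / q x) = fun x => -((-x) / q (-x)) := by
        funext x
        rw [hqe x]
        ring
      rw [heq]
      simpa [Function.comp] using hcomp.neg
    have hL : Tendsto G atTop (𝓝 0) := by
      rw [hGdef]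
      simpa using htq.const_mul (8 * c ^ 2 / γ)
    have hl : Tendsto G atBot (𝓝 0) := by
      rw [hGdef]
      simpa using hbq.const_mul (8 * c ^ 2 / γ)
    rw [integral_eq_of_tendsto hGd h24 hL hl]
    ring
  rw [hzero, hsq0, solMass]
  ring


set_option maxHeartbeats 1600000 in
lemma cosh_branch (γ ω c : ℝ) (hγ0 : γ ≠ 0) (hne : c ≠ 2 * Real.sqrt ω)
    (hk2 : 0 < 4 * ω - c ^ 2) (ha2 : 0 < c ^ 2 + γ * (4 * ω - c ^ 2))
    (hac : c < Real.sqrt (c ^ 2 + γ * (4 * ω - c ^ 2))) :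
    solMom γ ω c = c / 2 * (-1 + 1 / γ) * solMass γ ω c + 2 / γ * Real.sqrt (4 * ω - c ^ 2) := by
  set k := Real.sqrt (4 * ω - c ^ 2) with hkdef
  set a := Real.sqrt (c ^ 2 + γ * (4 * ω - c ^ 2)) with hadef
  have hk0 : 0 < k := Real.sqrt_pos.2 hk2
  have ha0 : 0 < a := Real.sqrt_pos.2 ha2
  have hksq : k ^ 2 = 4 * ω - c ^ 2 := Real.sq_sqrt hk2.le
  have hasq : a ^ 2 = c ^ 2 + γ * k ^ 2 := by rw [hadef, Real.sq_sqrt ha2.le, hksq]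
  set D : ℝ → ℝ := fun x => a * Real.cosh (k * x) - c with hDdef
  set m : ℝ := a - max c 0 with hmdef
  have hm0 : 0 < m := by rw [hmdef]; exact sub_pos.2 (max_lt hac ha0)
  have hDm : ∀ x, m * Real.cosh (k * x) ≤ D x := by
    intro x
    have hch := Real.one_le_cosh (k * x)
    simp only [hDdef, hmdef]
    rcases le_or_gt c 0 with h | h
    · rw [max_eq_right h]
      nlinarith [Real.cosh_pos (k * x)]
    · rw [max_eq_left h.le]
      nlinarith
  have hD0 : ∀ x, 0 < D x := fun x =>
    lt_of_lt_of_le (mul_pos hm0 (Real.cosh_pos _)) (hDm x)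
  have hDc : Continuous D := by
    simp only [hDdef]; fun_prop
  set u : ℝ → ℝ := fun x => 2 * k ^ 2 / D x with hudef
  have hPhi : Phi γ ω c = fun x => Real.sqrt (u x) := by
    funext x
    simp only [Phi, if_neg hne, hudef, hDdef]
    rw [hksq, hkdef, hadef]
  have hu0 : ∀ x, 0 < u x := fun x => div_pos (by positivity) (hD0 x)
  have hP2 : ∀ x, (Phi γ ω c x) ^ 2 = u x := fun x => by
    rw [hPhi]; exact Real.sq_sqrt (hu0 x).le
  have huc : Continuous u := continuous_const.div hDc fun x => (hD0 x).ne'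
  have hcont : Continuous (Phi γ ω c) := by
    rw [hPhi]; exact Real.continuous_sqrt.comp huc
  have hkx : ∀ x : ℝ, HasDerivAt (fun y : ℝ => k * y) k x := by
    intro x
    simpa using (hasDerivAt_id x).const_mul k
  have hDd : ∀ x, HasDerivAt D (a * (Real.sinh (k * x) * k)) x := by
    intro x
    have h3 : HasDerivAt (fun y => a * Real.cosh (k * y) - c)
        (a * (Real.sinh (k * x) * k)) x := by
      exact (((Real.hasDerivAt_cosh (k * x)).comp x (hkx x)).const_mul a).sub_const c
    rw [hDdef]; exact h3
  have hud : ∀ x, HasDerivAt u (-(2 * k ^ 3 * a * Real.sinh (k * x)) / (D x) ^ 2) x := by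
    intro x
    have h := (hasDerivAt_const x (2 * k ^ 2)).div (hDd x) (hD0 x).ne'
    rw [hudef]
    refine h.congr_deriv ?_
    field_simp
    ring
  set Φ' : ℝ → ℝ :=
    fun x => -(2 * k ^ 3 * a * Real.sinh (k * x)) / (D x) ^ 2 / (2 * Real.sqrt (u x)) with hΦ'def
  have hΦd : ∀ x, HasDerivAt (Phi γ ω c) (Φ' x) x := fun x => by
    rw [hPhi]; exact (hud x).sqrt (hu0 x).ne'
  have hgen : ∀ (v u' : ℝ), 0 < v → u' / (2 * Real.sqrt v) * Real.sqrt v = u' / 2 := by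
    intro v u' hv
    have h := (Real.sqrt_pos.2 hv).ne'
    field_simp
  have hImeq : ∀ x, Φ' x * Phi γ ω c x = -(k ^ 3 * a * Real.sinh (k * x)) / (D x) ^ 2 := by
    intro x
    rw [hPhi]
    calc Φ' x * Real.sqrt (u x)
        = -(2 * k ^ 3 * a * Real.sinh (k * x)) / (D x) ^ 2 / (2 * Real.sqrt (u x))
          * Real.sqrt (u x) := rfl
      _ = -(2 * k ^ 3 * a * Real.sinh (k * x)) / (D x) ^ 2 / 2 := hgen _ _ (hu0 x)
      _ = -(k ^ 3 * a * Real.sinh (k * x)) / (D x) ^ 2 := by ring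
  -- integrability
  have hsc : ∀ x, |Real.sinh (k * x)| ≤ Real.cosh (k * x) := by
    intro x
    rw [Real.abs_sinh, ← Real.cosh_abs]
    exact (Real.sinh_lt_cosh _).le
  have hb2 : ∀ x, u x ≤ (2 * k ^ 2 / m) / Real.cosh (k * x) := by
    intro x
    rw [div_div]
    exact div_le_div_of_nonneg_left (by positivity) (by positivity) (hDm x)
  have hb2' : ∀ x, u x ≤ 2 * k ^ 2 / m := by
    intro x
    refine (hb2 x).trans ?_
    rw [div_div]
    exact div_le_div_of_nonneg_left (by positivity) (by positivity)
      (by nlinarith [Real.one_le_cosh (k * x)])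
  have h2 : Integrable (fun x => (Phi γ ω c x) ^ 2) := by
    apply integrable_of_le_inv_cosh hk0 (C := 2 * k ^ 2 / m) (hcont.pow 2)
    intro x
    rw [Pi.pow_apply, hP2, abs_of_nonneg (hu0 x).le]
    exact hb2 x
  have h4 : Integrable (fun x => (Phi γ ω c x) ^ 4) := by
    apply integrable_of_le_inv_cosh hk0 (C := (2 * k ^ 2 / m) * (2 * k ^ 2 / m)) (hcont.pow 4)
    intro x
    have h1 : (Phi γ ω c x) ^ 4 = (u x) ^ 2 := by
      rw [show (4 : ℕ) = 2 * 2 from rfl, pow_mul, hP2]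
    rw [Pi.pow_apply, h1, abs_of_nonneg (by positivity)]
    have := mul_le_mul (hb2' x) (hb2 x) (hu0 x).le (by positivity)
    calc (u x) ^ 2 = u x * u x := pow_two (u x)
      _ ≤ (2 * k ^ 2 / m) * ((2 * k ^ 2 / m) / Real.cosh (k * x)) := this
      _ = (2 * k ^ 2 / m) * (2 * k ^ 2 / m) / Real.cosh (k * x) := by ring
  have hIm : Integrable (fun x => Φ' x * Phi γ ω c x) := by
    rw [show (fun x => Φ' x * Phi γ ω c x)
      = fun x => -(k ^ 3 * a * Real.sinh (k * x)) / (D x) ^ 2 from funext hImeq]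
    apply integrable_of_le_inv_cosh hk0 (C := k ^ 3 * a / m ^ 2)
    · exact ((continuous_const.mul ((Real.continuous_sinh.comp
        (continuous_const.mul continuous_id)))).neg).div (hDc.pow 2)
        fun x => pow_ne_zero 2 (hD0 x).ne'
    · intro x
      rw [abs_div, abs_of_pos (pow_pos (hD0 x) 2), abs_neg,
        div_le_div_iff₀ (pow_pos (hD0 x) 2) (Real.cosh_pos _)]
      have hA : |k ^ 3 * a * Real.sinh (k * x)| = k ^ 3 * a * |Real.sinh (k * x)| := by
        rw [abs_mul, abs_of_pos (by positivity : (0:ℝ) < k ^ 3 * a)]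
      rw [hA]
      have hB : m ^ 2 * Real.cosh (k * x) ^ 2 ≤ (D x) ^ 2 := by
        have := hDm x
        nlinarith [Real.cosh_pos (k * x), mul_pos hm0 (Real.cosh_pos (k * x))]
      have hC := hsc x
      have hD2 : k ^ 3 * a / m ^ 2 * (m ^ 2 * Real.cosh (k * x) ^ 2)
          = k ^ 3 * a * Real.cosh (k * x) ^ 2 := by
        field_simp
      nlinarith [Real.cosh_pos (k * x), abs_nonneg (Real.sinh (k * x)),
        mul_le_mul_of_nonneg_left hB (by positivity : (0:ℝ) ≤ k ^ 3 * a / m ^ 2),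
        mul_le_mul_of_nonneg_left hC (by positivity : (0:ℝ) ≤ k ^ 3 * a * Real.cosh (k * x))]
  -- final computation
  rw [mom_repr γ ω c Φ' hcont hΦd h2 h4 hIm]
  have hsplit : (fun x => -(c / 2) * (Phi γ ω c x) ^ 2 + (Phi γ ω c x) ^ 4 / 4)
      = fun x => (c / 2 * (-1 + 1 / γ)) * (Phi γ ω c x) ^ 2
        + (1 / 4) * ((Phi γ ω c x) ^ 4 - (2 * c / γ) * (Phi γ ω c x) ^ 2) := by
    funext x
    field_simp
    ring
  have h24 : Integrable (fun x => (Phi γ ω c x) ^ 4 - (2 * c / γ) * (Phi γ ω c x) ^ 2) :=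
    h4.sub (h2.const_mul _)
  rw [hsplit, integral_add (h2.const_mul _) (h24.const_mul _),
    integral_const_mul, integral_const_mul]
  have hval : ∫ x, ((Phi γ ω c x) ^ 4 - (2 * c / γ) * (Phi γ ω c x) ^ 2) = 8 * k / γ := by
    set G : ℝ → ℝ := fun x => 4 * k * a / γ * (Real.sinh (k * x) / D x) with hGdef
    have hGd : ∀ x, HasDerivAt G
        ((Phi γ ω c x) ^ 4 - (2 * c / γ) * (Phi γ ω c x) ^ 2) x := by
      intro x
      have h1 : HasDerivAt (fun y => Real.sinh (k * y)) (Real.cosh (k * x) * k) x := by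
        exact (Real.hasDerivAt_sinh (k * x)).comp x (hkx x)
      have h5 := (h1.div (hDd x) (hD0 x).ne').const_mul (4 * k * a / γ)
      rw [hGdef]
      refine h5.congr_deriv ?_
      have h6 : (Phi γ ω c x) ^ 4 = (u x) ^ 2 := by
        rw [show (4 : ℕ) = 2 * 2 from rfl, pow_mul, hP2]
      have hC2 := Real.cosh_sq_sub_sinh_sq (k * x)
      have hnum : Real.cosh (k * x) * k * (a * Real.cosh (k * x) - c)
          - Real.sinh (k * x) * (a * (Real.sinh (k * x) * k))
          = k * (a - c * Real.cosh (k * x)) := by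
        linear_combination (a * k) * hC2
      rw [h6, hP2]
      simp only [hudef, hDdef]
      rw [hnum]
      have hD' : a * Real.cosh (k * x) - c ≠ 0 := by
        have := hD0 x; simp only [hDdef] at this; exact this.ne'
      field_simp
      linear_combination 4 * hasq
    -- limits
    set h : ℝ → ℝ := fun t => (1 - t ^ 2) / (a * (1 + t ^ 2) - 2 * c * t) with hhdef
    have hhc : ContinuousAt h 0 := by
      apply ContinuousAt.div (by fun_prop) (by fun_prop)
      norm_num
      exact ha0.ne'
    have hh0 : h 0 = 1 / a := by rw [hhdef]; norm_num
    have hden : ∀ x, a * (1 + Real.exp (-(k * x)) ^ 2) - 2 * c * Real.exp (-(k * x))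
        = 2 * Real.exp (-(k * x)) * D x := by
      intro x
      simp only [hDdef, Real.cosh_eq]
      rw [Real.exp_neg]
      field_simp [Real.exp_ne_zero]
    have hden' : ∀ x, a * (1 + Real.exp (k * x) ^ 2) - 2 * c * Real.exp (k * x)
        = 2 * Real.exp (k * x) * D x := by
      intro x
      simp only [hDdef, Real.cosh_eq]
      rw [Real.exp_neg]
      field_simp [Real.exp_ne_zero]
      ring
    have hsinh_eq : ∀ x, Real.sinh (k * x) / D x = h (Real.exp (-(k * x))) := by
      intro x
      simp only [hhdef]
      rw [hden x, Real.sinh_eq, Real.exp_neg]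
      field_simp [Real.exp_ne_zero, (hD0 x).ne']
    have hsinh_eq' : ∀ x, Real.sinh (k * x) / D x = -h (Real.exp (k * x)) := by
      intro x
      simp only [hhdef]
      rw [hden' x, Real.sinh_eq, Real.exp_neg]
      field_simp [Real.exp_ne_zero, (hD0 x).ne']
      ring
    have htexp : Tendsto (fun x : ℝ => Real.exp (-(k * x))) atTop (𝓝 0) := by
      have h1 : Tendsto (fun x : ℝ => k * x) atTop atTop := tendsto_id.const_mul_atTop hk0
      exact Real.tendsto_exp_neg_atTop_nhds_zero.comp h1
    have htexp' : Tendsto (fun x : ℝ => Real.exp (k * x)) atBot (𝓝 0) := by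
      have h1 : Tendsto (fun x : ℝ => k * x) atBot atBot := tendsto_id.const_mul_atBot hk0
      exact Real.tendsto_exp_atBot.comp h1
    have htop : Tendsto (fun x => Real.sinh (k * x) / D x) atTop (𝓝 (1 / a)) := by
      have h1 := hhc.tendsto.comp htexp
      rw [hh0] at h1
      exact h1.congr fun x => (hsinh_eq x).symm
    have hbot : Tendsto (fun x => Real.sinh (k * x) / D x) atBot (𝓝 (-(1 / a))) := by
      have h1 := (hhc.tendsto.comp htexp').neg
      rw [hh0] at h1
      exact h1.congr fun x => (hsinh_eq' x).symm
    have hGt : Tendsto G atTop (𝓝 (4 * k * a / γ * (1 / a))) := by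
      rw [hGdef]; exact htop.const_mul _
    have hGb : Tendsto G atBot (𝓝 (4 * k * a / γ * (-(1 / a)))) := by
      rw [hGdef]; exact hbot.const_mul _
    rw [integral_eq_of_tendsto hGd h24 hGt hGb]
    field_simp
    ring
  rw [hval, solMass]
  ring


/-- Momentum formula for the solitons (`γ ≠ 0`):
`P(φ_{ω,c}) = (c/2)(-1 + 1/γ) M(φ_{ω,c}) + (2/γ)√(4ω - c²)`. -/
theorem stmt_8 (b γ ω c : ℝ) (hb : b ≠ -3 / 16) (hγ : γ = 1 + 16 / 3 * b) (hω : 0 < ω)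
    (hc1 : 0 < γ → -2 * Real.sqrt ω < c ∧ c ≤ 2 * Real.sqrt ω)
    (hc2 : γ < 0 → -2 * Real.sqrt ω < c ∧
      c < -2 * Real.sqrt (-γ / (1 - γ)) * Real.sqrt ω) :
    solMom γ ω c =
      c / 2 * (-1 + 1 / γ) * solMass γ ω c + 2 / γ * Real.sqrt (4 * ω - c ^ 2) := by
  have hγ0 : γ ≠ 0 := by
    intro h
    rw [h] at hγ
    exact hb (by linarith)
  have hsw : 0 < Real.sqrt ω := Real.sqrt_pos.2 hω
  have hwsq : Real.sqrt ω ^ 2 = ω := Real.sq_sqrt hω.le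
  rcases lt_trichotomy γ 0 with hneg | h0 | hpos
  · obtain ⟨hL, hR⟩ := hc2 hneg
    have h1γ : (0 : ℝ) < 1 - γ := by linarith
    set s := Real.sqrt (-γ / (1 - γ)) with hsdef
    have hs0 : 0 ≤ s := Real.sqrt_nonneg _
    have hs00 : 0 ≤ 2 * s * Real.sqrt ω := by positivity
    have hcneg : c < 0 := by nlinarith
    have hne : c ≠ 2 * Real.sqrt ω := by
      intro h
      rw [h] at hcneg
      nlinarith
    have hk2 : 0 < 4 * ω - c ^ 2 := by
      nlinarith [mul_pos (neg_pos.2 hcneg) (show 0 < c + 2 * Real.sqrt ω by linarith)]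
    have hss : s ^ 2 = -γ / (1 - γ) := Real.sq_sqrt (div_nonneg (by linarith) h1γ.le)
    have hsγ : s ^ 2 * (1 - γ) = -γ := by
      rw [hss]
      field_simp
    have hcc : 4 * s ^ 2 * ω < c ^ 2 := by
      nlinarith [mul_pos (show 0 < -c - 2 * s * Real.sqrt ω by linarith)
        (show 0 < -c + 2 * s * Real.sqrt ω by nlinarith), hwsq]
    have ha2 : 0 < c ^ 2 + γ * (4 * ω - c ^ 2) := by
      have h5 : 4 * ω * (s ^ 2 * (1 - γ)) = 4 * ω * (-γ) := by rw [hsγ]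
      nlinarith [mul_lt_mul_of_pos_right hcc h1γ]
    have hac : c < Real.sqrt (c ^ 2 + γ * (4 * ω - c ^ 2)) :=
      lt_of_lt_of_le hcneg (Real.sqrt_nonneg _)
    exact cosh_branch γ ω c hγ0 hne hk2 ha2 hac
  · exact absurd h0 hγ0
  · obtain ⟨hL, hR⟩ := hc1 hpos
    rcases eq_or_lt_of_le hR with heq | hlt
    · exact alg_branch γ ω c hpos hω heq
    · have hne : c ≠ 2 * Real.sqrt ω := ne_of_lt hlt
      have hk2 : 0 < 4 * ω - c ^ 2 := by nlinarith
      have ha2 : 0 < c ^ 2 + γ * (4 * ω - c ^ 2) := by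
        nlinarith [mul_pos hpos hk2, sq_nonneg c]
      have hac : c < Real.sqrt (c ^ 2 + γ * (4 * ω - c ^ 2)) := by
        rcases le_or_gt c 0 with h | h
        · exact lt_of_le_of_lt h (Real.sqrt_pos.2 ha2)
        · exact (Real.lt_sqrt h.le).2 (by nlinarith [mul_pos hpos hk2])
      exact cosh_branch γ ω c hγ0 hne hk2 ha2 hac
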